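/- Let D_fly ↦ T(D_fly) = D_fly/V_max + Σ_{m=1}^M (Ũ_m - U_{fly,m}(D_fly))/R_{hover,m}, where V_max > 0, R_{hover,m} > 0, Ũ_m ≥ 0 are constants, D_fly = Σ_m D_{fly,m}, and for each m the throughput accumulated while flying satisfies the rate bound: reducing the flying distance associated with GBS m by ΔD_m > 0 reduces U_{fly,m} by U_{ΔD_m} with U_{ΔD_m} < (ΔD_m / V_max) · R_{hover,m}. Then for any ΔD = Σ_m ΔD_m > 0, T(D_fly - ΔD) < T(D_fly); that is, T is strictly increasing in D_fly. -/
import Mathlib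


open Finset

/-- Proposition 2: the fly-hover-fly mission completion time
`T(D_fly) = D_fly/V_max + Σ_m (Ũ_m - U_{fly,m})/R_{hover,m}` is strictly
increasing in the flying distance: reducing the per-GBS flying distances by
`ΔD_m ≥ 0` (with total reduction positive), which reduces the flown throughput
to GBS `m` by `U_{ΔD_m} < (ΔD_m/V_max)·R_{hover,m}` whenever `ΔD_m > 0`,
strictly reduces the mission completion time. -/
theorem stmt2 (M : ℕ) (V : ℝ) (hV : 0 < V)
    (R U D Ufly ΔD UΔ : Fin M → ℝ)
    (hR : ∀ m, 0 < R m) (hU : ∀ m, 0 ≤ U m)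
    (hΔD : ∀ m, 0 ≤ ΔD m)
    (hUΔ : ∀ m, 0 < ΔD m → UΔ m < ΔD m / V * R m)
    (hUΔ0 : ∀ m, ΔD m = 0 → UΔ m = 0)
    (hpos : 0 < ∑ m, ΔD m) :
    (∑ m, D m - ∑ m, ΔD m) / V + ∑ m, (U m - (Ufly m - UΔ m)) / R m <
      (∑ m, D m) / V + ∑ m, (U m - Ufly m) / R m := by
  have key : ∑ m, UΔ m / R m < ∑ m, ΔD m / V := by
    obtain ⟨m0, -, hm0⟩ : ∃ m ∈ Finset.univ, 0 < ΔD m := by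
      by_contra h
      push_neg at h
      have : ∑ m, ΔD m ≤ 0 := Finset.sum_nonpos fun m hm => h m hm
      linarith
    apply Finset.sum_lt_sum
    · intro m _
      rcases eq_or_lt_of_le (hΔD m) with h | h
      · rw [hUΔ0 m h.symm, ← h]; simp
      · have := hUΔ m h
        rw [div_le_div_iff₀ (hR m) hV]
        calc UΔ m * V ≤ (ΔD m / V * R m) * V := by nlinarith
          _ = ΔD m * R m := by field_simp
    · exact ⟨m0, Finset.mem_univ m0, by
        have := hUΔ m0 hm0
        rw [div_lt_div_iff₀ (hR m0) hV]
        calc UΔ m0 * V < (ΔD m0 / V * R m0) * V := by nlinarith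
          _ = ΔD m0 * R m0 := by field_simp⟩
  have e1 : ∀ m, (U m - (Ufly m - UΔ m)) / R m = (U m - Ufly m) / R m + UΔ m / R m := by
    intro m; field_simp; ring
  simp only [e1, Finset.sum_add_distrib, sub_div, Finset.sum_div]
  linarith
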